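/- Rigidity in the Hersch-type bound: under the balanced condition, if λ_2(P_{g_w}) = 24 for g_w = e^{2w} g_r with Vol(S^4, g_w) = ω_4 and ∫ e^{4w} x_i dv_{g_r} = 0 for all i, then the coordinate functions x_i are eigenfunctions of P_{g_w} with eigenvalue 24, and e^{4w} ≡ 1, so g_w = g_r. -/

import Mathlib

open MeasureTheory

/-- The `i`-th standard coordinate function of `ℝ⁵` restricted to the round sphere `S⁴`. -/
noncomputable def sphereCoord (i : Fin 5)
    (p : Metric.sphere (0 : EuclideanSpace ℝ (Fin 5)) 1) : ℝ :=
  (p : EuclideanSpace ℝ (Fin 5)) i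

/-- Rigidity in the Hersch-type bound.  In the setting of the Hersch bound
on `(S⁴, g_r)` (same-volume conformal metric `g_w = e^{2w} g_r`, balanced condition,
variational characterization of `λ₂(P_{g_w})` where equality in the Rayleigh quotient
forces the test function to be an eigenfunction, and conformal covariance
`P_{g_w} φ = e^{-4w} P_{g_r} φ` with `P_{g_r} x_i = 24 x_i`), if `λ₂(P_{g_w}) = 24`
then each coordinate function `x_i` is an eigenfunction of `P_{g_w}` with eigenvalue
`24`, and `e^{4w} ≡ 1`, i.e. `w ≡ 0`, so `g_w = g_r`. -/
theorem hersch_bound_paneitz_sphere_rigidity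
    (μ : Measure (Metric.sphere (0 : EuclideanSpace ℝ (Fin 5)) 1)) [IsFiniteMeasure μ]
    (hμpos : 0 < (μ Set.univ).toReal)
    (w : Metric.sphere (0 : EuclideanSpace ℝ (Fin 5)) 1 → ℝ)
    (Pgr Pgw : (Metric.sphere (0 : EuclideanSpace ℝ (Fin 5)) 1 → ℝ) →
               (Metric.sphere (0 : EuclideanSpace ℝ (Fin 5)) 1 → ℝ))
    (lam2 : ℝ)
    (hPgr : ∀ (i : Fin 5) p, Pgr (sphereCoord i) p = 24 * sphereCoord i p)
    (hconf : ∀ (φ : Metric.sphere (0 : EuclideanSpace ℝ (Fin 5)) 1 → ℝ) p,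
      Pgw φ p = Real.exp (-(4 : ℝ) * w p) * Pgr φ p)
    (hexp : Integrable (fun p => Real.exp (4 * w p)) μ)
    (hvol : ∫ p, Real.exp (4 * w p) ∂μ = (μ Set.univ).toReal)
    (hbal : ∀ i : Fin 5, ∫ p, Real.exp (4 * w p) * sphereCoord i p ∂μ = 0)
    (hlam : ∀ φ : Metric.sphere (0 : EuclideanSpace ℝ (Fin 5)) 1 → ℝ,
      (∫ p, φ p * Real.exp (4 * w p) ∂μ) = 0 →
      lam2 * ∫ p, (φ p) ^ 2 * Real.exp (4 * w p) ∂μ ≤ ∫ p, φ p * Pgr φ p ∂μ)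
    (hmin : ∀ φ : Metric.sphere (0 : EuclideanSpace ℝ (Fin 5)) 1 → ℝ,
      (∫ p, φ p * Real.exp (4 * w p) ∂μ) = 0 →
      lam2 * ∫ p, (φ p) ^ 2 * Real.exp (4 * w p) ∂μ = ∫ p, φ p * Pgr φ p ∂μ →
      ∀ p, Pgw φ p = lam2 * φ p)
    (heq : lam2 = 24) :
    (∀ (i : Fin 5) p, Pgw (sphereCoord i) p = 24 * sphereCoord i p) ∧
    (∀ p, Real.exp (4 * w p) = 1) ∧ (∀ p, w p = 0) := by
  subst heq
  -- sum of squares of coordinates is 1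
  have hsum : ∀ p : Metric.sphere (0 : EuclideanSpace ℝ (Fin 5)) 1,
      ∑ i : Fin 5, (sphereCoord i p) ^ 2 = 1 := by
    intro p
    have hp : ‖(p : EuclideanSpace ℝ (Fin 5))‖ = 1 := by
      simpa using mem_sphere_zero_iff_norm.mp p.2
    have hnorm := EuclideanSpace.norm_eq (p : EuclideanSpace ℝ (Fin 5))
    rw [hp] at hnorm
    have : ∑ i : Fin 5, ‖(p : EuclideanSpace ℝ (Fin 5)) i‖ ^ 2 = 1 :=
      Real.sqrt_eq_one.mp hnorm.symm
    simpa [sphereCoord, Real.norm_eq_abs, sq_abs] using this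
  have hc : ∀ i : Fin 5, Continuous (sphereCoord i) := fun i =>
    (continuous_apply i).comp ((PiLp.continuous_ofLp _ _).comp continuous_subtype_val)
  have hbd : ∀ (i : Fin 5) p, (sphereCoord i p) ^ 2 ≤ 1 := by
    intro i p
    rw [← hsum p]
    exact Finset.single_le_sum (fun j _ => sq_nonneg (sphereCoord j p)) (Finset.mem_univ i)
  -- integrability
  have hint : ∀ i : Fin 5,
      Integrable (fun p => (sphereCoord i p) ^ 2 * Real.exp (4 * w p)) μ := by
    intro i
    refine hexp.mono' ((((hc i).pow 2).aestronglyMeasurable).mul hexp.1) ?_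
    filter_upwards with p
    have h1 : (0:ℝ) < Real.exp (4 * w p) := Real.exp_pos _
    rw [Real.norm_eq_abs, abs_mul, abs_of_nonneg (sq_nonneg _), abs_of_pos h1]
    nlinarith [hbd i p]
  have hint2 : ∀ i : Fin 5, Integrable (fun p => (sphereCoord i p) ^ 2) μ := by
    intro i
    refine (integrable_const (1:ℝ)).mono' (((hc i).pow 2).aestronglyMeasurable) ?_
    filter_upwards with p
    rw [Real.norm_eq_abs, abs_of_nonneg (sq_nonneg _)]
    exact hbd i p
  -- balanced condition in the form needed
  have hbal' : ∀ i : Fin 5, ∫ p, sphereCoord i p * Real.exp (4 * w p) ∂μ = 0 := by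
    intro i
    rw [← hbal i]
    congr 1; ext p; ring
  -- sum A
  have hA : ∑ i : Fin 5, ∫ p, (sphereCoord i p) ^ 2 * Real.exp (4 * w p) ∂μ
      = (μ Set.univ).toReal := by
    rw [← integral_finset_sum _ (fun i _ => hint i)]
    rw [← hvol]
    congr 1; ext p
    rw [← Finset.sum_mul, hsum p, one_mul]
  -- sum B
  have hB : ∑ i : Fin 5, ∫ p, sphereCoord i p * Pgr (sphereCoord i) p ∂μ
      = 24 * (μ Set.univ).toReal := by
    have hBi : ∀ i : Fin 5, ∫ p, sphereCoord i p * Pgr (sphereCoord i) p ∂μ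
        = 24 * ∫ p, (sphereCoord i p) ^ 2 ∂μ := by
      intro i
      rw [← integral_const_mul]
      congr 1; ext p
      rw [hPgr i p]; ring
    simp_rw [hBi]
    rw [← Finset.mul_sum, ← integral_finset_sum _ (fun i _ => hint2 i)]
    have : ∫ p, ∑ i : Fin 5, (sphereCoord i p) ^ 2 ∂μ = (μ Set.univ).toReal := by
      simp_rw [hsum]
      rw [integral_const, smul_eq_mul, mul_one, Measure.real]
    rw [this]
  -- equality for each i
  have key : ∀ i : Fin 5,
      24 * ∫ p, (sphereCoord i p) ^ 2 * Real.exp (4 * w p) ∂μ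
        = ∫ p, sphereCoord i p * Pgr (sphereCoord i) p ∂μ := by
    have hle : ∀ i ∈ Finset.univ, 24 * ∫ p, (sphereCoord i p) ^ 2 * Real.exp (4 * w p) ∂μ
        ≤ ∫ p, sphereCoord i p * Pgr (sphereCoord i) p ∂μ :=
      fun i _ => hlam (sphereCoord i) (hbal' i)
    have hsums : ∑ i : Fin 5, 24 * ∫ p, (sphereCoord i p) ^ 2 * Real.exp (4 * w p) ∂μ
        = ∑ i : Fin 5, ∫ p, sphereCoord i p * Pgr (sphereCoord i) p ∂μ := by
      rw [← Finset.mul_sum, hA, hB]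
    exact fun i => (Finset.sum_eq_sum_iff_of_le hle).mp hsums i (Finset.mem_univ i)
  have hP : ∀ (i : Fin 5) p, Pgw (sphereCoord i) p = 24 * sphereCoord i p :=
    fun i => hmin (sphereCoord i) (hbal' i) (key i)
  have hw : ∀ p, w p = 0 := by
    intro p
    obtain ⟨i, -, hi⟩ : ∃ i ∈ Finset.univ, (sphereCoord i p) ^ 2 ≠ 0 := by
      apply Finset.exists_ne_zero_of_sum_ne_zero
      rw [hsum p]; norm_num
    have hxi : sphereCoord i p ≠ 0 := fun h => hi (by rw [h]; ring)
    have h1 := hP i p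
    rw [hconf (sphereCoord i) p, hPgr i p] at h1
    have hexp1 : Real.exp (-(4:ℝ) * w p) = 1 := by
      have h2 : (Real.exp (-(4:ℝ) * w p) - 1) * (24 * sphereCoord i p) = 0 := by
        linear_combination h1
      rcases mul_eq_zero.mp h2 with h2 | h2
      · linarith
      · exact absurd (by linarith : sphereCoord i p = 0) hxi
    have h0 : -(4:ℝ) * w p = 0 :=
      Real.exp_eq_exp.mp (by rw [hexp1, Real.exp_zero])
    linarith
  refine ⟨hP, fun p => ?_, hw⟩
  rw [hw p]; simp
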